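/- arXiv:2407.02619 — 2 statements merged into one kernel-verified Lean document; each statement's English description precedes it below -/
import Mathlib

section
/- For an oriented matroid M on ground set E with covector set Cov, and any finite subset E' ⊆ E, the covector set of the restriction M|_{E'} equals {X|_{E'} : X ∈ Cov}; in particular restriction gives an order-preserving surjection Cov → Cov(M|_{E'}). -/
noncomputable section

variable {E : Type*} [DecidableEq E] {n : ℕ}

/-- A chirotope of rank `n+1` on the ground set `E`: a nonzero alternating map
`(Fin (n+1) → E) → {0,±1}` satisfying the Grassmann–Plücker relations over the
sign hyperfield. -/
def IsChirotope (φ : (Fin (n + 1) → E) → ℝ) : Prop :=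
  (∃ b, φ b ≠ 0) ∧
  (∀ b, φ b = 0 ∨ φ b = 1 ∨ φ b = -1) ∧
  (∀ (b : Fin (n + 1) → E) (σ : Equiv.Perm (Fin (n + 1))),
    φ (b ∘ σ) = ((Equiv.Perm.sign σ : ℤ) : ℝ) * φ b) ∧
  (∀ (b : Fin (n + 1) → E) (i j : Fin (n + 1)), i ≠ j → b i = b j → φ b = 0) ∧
  (∀ (x : Fin (n + 2) → E) (y : Fin n → E),
    (∀ k : Fin (n + 2), ((-1 : ℝ) ^ (k : ℕ)) * φ (x ∘ k.succAbove) * φ (Fin.cons (x k) y) = 0) ∨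
    (∃ k l : Fin (n + 2),
      0 < ((-1 : ℝ) ^ (k : ℕ)) * φ (x ∘ k.succAbove) * φ (Fin.cons (x k) y) ∧
      ((-1 : ℝ) ^ (l : ℕ)) * φ (x ∘ l.succAbove) * φ (Fin.cons (x l) y) < 0))

/-- Composition of signed sets. -/
def scomp (X Y : E → ℝ) : E → ℝ := fun e => if X e ≠ 0 then X e else Y e

/-- A cocircuit of the oriented matroid with chirotope `φ`. -/
def IsCocircuit (φ : (Fin (n + 1) → E) → ℝ) (X : E → ℝ) : Prop :=
  X ≠ 0 ∧ ∃ (ε : ℝ) (μ : Fin n → E), (ε = 1 ∨ ε = -1) ∧ ∀ e, X e = ε * φ (Fin.cons e μ)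

/-- Covectors: finite compositions of cocircuits (the empty composition is `0`). -/
inductive IsCovector (φ : (Fin (n + 1) → E) → ℝ) : (E → ℝ) → Prop
  | zero : IsCovector φ 0
  | cocirc (X : E → ℝ) : IsCocircuit φ X → IsCovector φ X
  | comp (X Y : E → ℝ) : IsCocircuit φ X → IsCovector φ Y → IsCovector φ (scomp X Y)

/-- The partial order on signed sets: `X ≤ Y` iff `Y` agrees with `X` on the
support of `X`. -/
def sle (X Y : E → ℝ) : Prop := ∀ e, X e ≠ 0 → Y e = X e

/-- A finite set is independent iff it is contained in (the range of) a basis. -/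
def Indep (φ : (Fin (n + 1) → E) → ℝ) (S : Finset E) : Prop :=
  ∃ b : Fin (n + 1) → E, φ b ≠ 0 ∧ (S : Set E) ⊆ Set.range b

/-- Flats of the underlying matroid: sets closed under the closure operator. -/
def IsFlat (φ : (Fin (n + 1) → E) → ℝ) (F : Set E) : Prop :=
  ∀ e : E, (∃ S : Finset E, (S : Set E) ⊆ F ∧ Indep φ S ∧ ¬ Indep φ (insert e S)) → e ∈ F

/-- The restriction of a chirotope to a subset of the ground set. -/
def restrictChi (φ : (Fin (n + 1) → E) → ℝ) (E' : Set E) : (Fin (n + 1) → E') → ℝ :=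
  fun b => φ fun i => (b i : E)

set_option linter.unusedSectionVars false

-- ===== infrastructure =====

lemma scomp_zero_left (Y : E → ℝ) : scomp 0 Y = Y := by
  funext e; simp [scomp]

lemma scomp_assoc (X Y Z : E → ℝ) : scomp (scomp X Y) Z = scomp X (scomp Y Z) := by
  funext e; by_cases h : X e = 0 <;> by_cases h2 : Y e = 0 <;> simp [scomp, h, h2]

lemma IsCocircuit.smul {φ : (Fin (n + 1) → E) → ℝ} {X : E → ℝ} {c : ℝ}
    (hc : c = 1 ∨ c = -1) (hX : IsCocircuit φ X) : IsCocircuit φ (fun e => c * X e) := by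
  obtain ⟨hne, ε, μ, hε, hval⟩ := hX
  have hc0 : c ≠ 0 := by rcases hc with h | h <;> simp [h]
  refine ⟨?_, c * ε, μ, ?_, fun e => by simp only []; rw [hval e]; ring⟩
  · obtain ⟨e, he⟩ := Function.ne_iff.mp hne
    exact Function.ne_iff.mpr ⟨e, by simpa using mul_ne_zero hc0 he⟩
  · rcases hc with h | h <;> rcases hε with h' | h' <;> simp [h, h']

lemma IsCovector.smul {φ : (Fin (n + 1) → E) → ℝ} {X : E → ℝ} {c : ℝ}
    (hc : c = 1 ∨ c = -1) (hX : IsCovector φ X) : IsCovector φ (fun e => c * X e) := by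
  have hc0 : c ≠ 0 := by rcases hc with h | h <;> simp [h]
  induction hX with
  | zero => convert IsCovector.zero (φ := φ) using 1; funext e; simp
  | cocirc X hX => exact IsCovector.cocirc _ (hX.smul hc)
  | comp X Y hX hY ih =>
    have : (fun e => c * scomp X Y e) = scomp (fun e => c * X e) (fun e => c * Y e) := by
      funext e; by_cases h : X e = 0 <;> simp [scomp, h, hc0]
    rw [this]
    exact IsCovector.comp _ _ (hX.smul hc) ih

lemma IsCovector.scompCov {φ : (Fin (n + 1) → E) → ℝ} {X Y : E → ℝ}
    (hX : IsCovector φ X) (hY : IsCovector φ Y) : IsCovector φ (scomp X Y) := by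
  induction hX with
  | zero => rw [scomp_zero_left]; exact hY
  | cocirc X hX => exact IsCovector.comp _ _ hX hY
  | comp X W hX hW ih => rw [scomp_assoc]; exact IsCovector.comp _ _ hX ih

-- maximal element for transitive irreflexive relation on a finset
lemma finset_exists_rel_maximal {α : Type*} [DecidableEq α] (r : α → α → Prop) (s : Finset α) :
    (∀ a ∈ s, ¬ r a a) →
    (∀ a ∈ s, ∀ b ∈ s, ∀ c ∈ s, r a b → r b c → r a c) →
    s.Nonempty → ∃ a ∈ s, ∀ b ∈ s, ¬ r a b := by
  classical
  induction s using Finset.induction_on with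
  | empty => intro _ _ hne; exact absurd hne (by simp)
  | @insert x t hxt ih =>
    intro hirr htr _
    rcases t.eq_empty_or_nonempty with rfl | htne
    · exact ⟨x, Finset.mem_insert_self x _, fun b hb => by
        rcases Finset.mem_insert.mp hb with rfl | hb
        · exact hirr b (Finset.mem_insert_self b _)
        · simp at hb⟩
    · obtain ⟨a, hat, ha⟩ := ih
        (fun a ha => hirr a (Finset.mem_insert_of_mem ha))
        (fun a ha b hb c hc => htr a (Finset.mem_insert_of_mem ha) b
          (Finset.mem_insert_of_mem hb) c (Finset.mem_insert_of_mem hc)) htne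
      by_cases hax : r a x
      · refine ⟨x, Finset.mem_insert_self x _, fun b hb hrb => ?_⟩
        rcases Finset.mem_insert.mp hb with rfl | hb
        · exact hirr b (Finset.mem_insert_self b _) hrb
        · exact ha b hb (htr a (Finset.mem_insert_of_mem hat) x (Finset.mem_insert_self x _)
            b (Finset.mem_insert_of_mem hb) hax hrb)
      · refine ⟨a, Finset.mem_insert_of_mem hat, fun b hb hrb => ?_⟩
        rcases Finset.mem_insert.mp hb with rfl | hb
        · exact hax hrb
        · exact ha b hb hrb

-- tri-value helpers
lemma tri_mul {a b : ℝ} (ha : a = 0 ∨ a = 1 ∨ a = -1) (hb : b = 0 ∨ b = 1 ∨ b = -1) :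
    a * b = 0 ∨ a * b = 1 ∨ a * b = -1 := by
  rcases ha with h | h | h <;> rcases hb with h' | h' | h' <;> simp [h, h']

lemma tri_sq {a : ℝ} (ha : a = 0 ∨ a = 1 ∨ a = -1) (h : a ≠ 0) : a * a = 1 := by
  rcases ha with h' | h' | h' <;> simp [h'] at * 

lemma tri_pm {a : ℝ} (ha : a = 0 ∨ a = 1 ∨ a = -1) (h : a ≠ 0) : a = 1 ∨ a = -1 := by
  tauto

-- ===== permutation lemmas =====

lemma cons_succAbove_eq (x : Fin (n + 1) → E) (t : Fin (n + 1)) :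
    (Fin.cons (x t) (fun i => x (t.succAbove i)) : Fin (n + 1) → E)
      = x ∘ ⇑(Fin.cycleRange t)⁻¹ := by
  funext i
  induction i using Fin.cases with
  | zero =>
    have h : (Fin.cycleRange t)⁻¹ 0 = t := by
      rw [Equiv.Perm.inv_eq_iff_eq]; exact (Fin.cycleRange_self t).symm
    simp [h]
  | succ i =>
    have h : (Fin.cycleRange t)⁻¹ i.succ = t.succAbove i := by
      rw [Equiv.Perm.inv_eq_iff_eq]; exact (Fin.cycleRange_succAbove t i).symm
    simp [h]

lemma phi_cons_succAbove {φ : (Fin (n + 1) → E) → ℝ} (hφ : IsChirotope φ)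
    (x : Fin (n + 1) → E) (t : Fin (n + 1)) :
    φ (Fin.cons (x t) (fun i => x (t.succAbove i)))
      = ((Equiv.Perm.sign (Fin.cycleRange t) : ℤ) : ℝ) * φ x := by
  rw [cons_succAbove_eq, hφ.2.2.1 x (Fin.cycleRange t)⁻¹, map_inv]
  norm_num

lemma phi_cons_succAbove_ne_zero_iff {φ : (Fin (n + 1) → E) → ℝ} (hφ : IsChirotope φ)
    (x : Fin (n + 1) → E) (t : Fin (n + 1)) :
    φ (Fin.cons (x t) (fun i => x (t.succAbove i))) ≠ 0 ↔ φ x ≠ 0 := by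
  rw [phi_cons_succAbove hφ]
  rcases Int.units_eq_one_or (Equiv.Perm.sign (Fin.cycleRange t)) with h | h <;>
    simp [h]

-- ===== basis exchange =====

lemma chirotope_exchange {φ : (Fin (n + 1) → E) → ℝ} (hφ : IsChirotope φ)
    {x y : Fin (n + 1) → E} (hx : φ x ≠ 0) (hy : φ y ≠ 0) (t : Fin (n + 1)) :
    ∃ i, φ (Function.update x t (y i)) ≠ 0 := by
  set X : Fin (n + 2) → E := Fin.cons (x t) y with hX
  set Y : Fin n → E := fun i => x (t.succAbove i) with hY
  have hX0 : X 0 = x t := rfl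
  have hXsucc : ∀ i : Fin (n + 1), X i.succ = y i := fun i => by simp [hX]
  have hXcomp : X ∘ (0 : Fin (n + 2)).succAbove = y := by
    funext i; simp [hX, Fin.succAbove_zero]
  have ht0 : ((-1 : ℝ) ^ ((0 : Fin (n + 2)) : ℕ)) * φ (X ∘ (0 : Fin (n+2)).succAbove)
      * φ (Fin.cons (X 0) Y) ≠ 0 := by
    rw [hXcomp, hX0]
    have h2 : φ (Fin.cons (x t) Y) ≠ 0 := (phi_cons_succAbove_ne_zero_iff hφ x t).mpr hx
    simpa using mul_ne_zero hy h2
  rcases hφ.2.2.2.2 X Y with hall | ⟨k, l, hk, hl⟩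
  · exact absurd (hall 0) ht0
  · have hkl : k ≠ 0 ∨ l ≠ 0 := by
      by_contra h
      push_neg at h
      rw [h.1] at hk; rw [h.2] at hl; linarith
    have key : ∀ k0 : Fin (n + 2), k0 ≠ 0 →
        ((-1 : ℝ) ^ (k0 : ℕ)) * φ (X ∘ k0.succAbove) * φ (Fin.cons (X k0) Y) ≠ 0 →
        ∃ i, φ (Function.update x t (y i)) ≠ 0 := by
      intro k0 hk0 hne
      obtain ⟨i, rfl⟩ : ∃ i : Fin (n + 1), k0 = i.succ := ⟨k0.pred hk0, by simp⟩
      refine ⟨i, ?_⟩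
      have hval : (Fin.cons (X i.succ) Y : Fin (n+1) → E)
          = Fin.cons ((Function.update x t (y i)) t)
            ((fun i' => (Function.update x t (y i)) (t.succAbove i')) : Fin n → E) := by
        rw [hXsucc]
        funext i0
        induction i0 using Fin.cases with
        | zero => simp
        | succ i' => simp [hY, Function.update_of_ne (Fin.succAbove_ne t i')]
      have h2 : φ (Fin.cons (X i.succ) Y) ≠ 0 := by
        intro h0; rw [h0] at hne; simpa using hne
      rw [hval, phi_cons_succAbove hφ] at h2
      intro h0; rw [h0] at h2; simpa using h2
    rcases hkl with h | h
    · exact key k h (ne_of_gt hk)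
    · exact key l h (ne_of_lt hl)

-- ===== the contraction "determinant" =====

def Dfun {E : Type*} [DecidableEq E] {m : ℕ} (φ : (Fin (m + 2) → E) → ℝ)
    (μ : Fin (m + 1) → E) (j : Fin (m + 1)) (u v : E) : ℝ :=
  φ (Fin.cons u (Function.update μ j v))

variable {m : ℕ}

lemma Dfun_tri {φ : (Fin (m + 2) → E) → ℝ} (hφ : IsChirotope φ) (μ : Fin (m + 1) → E)
    (j : Fin (m + 1)) (u v : E) :
    Dfun φ μ j u v = 0 ∨ Dfun φ μ j u v = 1 ∨ Dfun φ μ j u v = -1 := hφ.2.1 _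

lemma Dfun_skew {φ : (Fin (m + 2) → E) → ℝ} (hφ : IsChirotope φ) (μ : Fin (m + 1) → E)
    (j : Fin (m + 1)) (u v : E) : Dfun φ μ j v u = - Dfun φ μ j u v := by
  have harg : (Fin.cons u (Function.update μ j v) : Fin (m + 2) → E) ∘ ⇑(Equiv.swap 0 j.succ)
      = Fin.cons v (Function.update μ j u) := by
    funext i
    induction i using Fin.cases with
    | zero =>
      simp only [Function.comp_apply, Equiv.swap_apply_left, Fin.cons_succ,
        Function.update_self, Fin.cons_zero]
    | succ i' =>
      rcases eq_or_ne i' j with rfl | hne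
      · simp only [Function.comp_apply, Equiv.swap_apply_right, Fin.cons_zero,
          Fin.cons_succ, Function.update_self]
      · have hsw : Equiv.swap (0 : Fin (m + 2)) j.succ i'.succ = i'.succ :=
          Equiv.swap_apply_of_ne_of_ne (Fin.succ_ne_zero i') (by simpa using hne)
        simp only [Function.comp_apply, hsw, Fin.cons_succ,
          Function.update_of_ne hne]
  have h := hφ.2.2.1 (Fin.cons u (Function.update μ j v)) (Equiv.swap 0 j.succ)
  rw [harg] at h
  rw [Dfun, Dfun, h, Equiv.Perm.sign_swap (Ne.symm (Fin.succ_ne_zero j))]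
  norm_num

lemma Dfun_diag {φ : (Fin (m + 2) → E) → ℝ} (hφ : IsChirotope φ) (μ : Fin (m + 1) → E)
    (j : Fin (m + 1)) (u : E) : Dfun φ μ j u u = 0 :=
  hφ.2.2.2.1 _ 0 j.succ (Ne.symm (Fin.succ_ne_zero j)) (by simp)

lemma Dfun_consP {φ : (Fin (m + 2) → E) → ℝ} (hφ : IsChirotope φ) (μ : Fin (m + 1) → E)
    (j : Fin (m + 1)) (a b : E) :
    φ (Fin.cons a (Fin.cons b (fun i => μ (j.succAbove i)) : Fin (m + 1) → E))
      = ((-1 : ℝ) ^ (j : ℕ)) * Dfun φ μ j a b := by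
  set x' : Fin (m + 2) → E := Fin.cons a (Function.update μ j b) with hx'
  have h1 : (Fin.cons (x' j.succ) (fun i => x' (j.succ.succAbove i)) : Fin (m + 2) → E)
      = Fin.cons b (Fin.cons a (fun i => μ (j.succAbove i)) : Fin (m + 1) → E) := by
    funext i
    induction i using Fin.cases with
    | zero =>
      simp only [hx', Fin.cons_zero, Fin.cons_succ, Function.update_self]
    | succ i' =>
      induction i' using Fin.cases with
      | zero =>
        have hz : j.succ.succAbove 0 = 0 := by
          rw [Fin.succAbove_of_castSucc_lt _ _ (by simpa using Fin.succ_pos j)]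
          rfl
        simp only [hx', Fin.cons_succ, hz, Fin.cons_zero]
      | succ i'' =>
        have hs : j.succ.succAbove i''.succ = (j.succAbove i'').succ :=
          Fin.succ_succAbove_succ j i''
        simp only [hx', Fin.cons_succ, hs,
          Function.update_of_ne (Fin.succAbove_ne j i'')]
  have h2 := phi_cons_succAbove hφ x' j.succ
  rw [h1] at h2
  have h3 : (Fin.cons b (Fin.cons a (fun i => μ (j.succAbove i)) : Fin (m + 1) → E)
        : Fin (m + 2) → E) ∘ ⇑(Equiv.swap 0 1)
      = Fin.cons a (Fin.cons b (fun i => μ (j.succAbove i)) : Fin (m + 1) → E) := by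
    funext i
    induction i using Fin.cases with
    | zero =>
      have h01 : ((1 : Fin (m + 2))) = (0 : Fin (m + 1)).succ := rfl
      simp only [Function.comp_apply, Equiv.swap_apply_left, h01, Fin.cons_succ,
        Fin.cons_zero]
    | succ i' =>
      induction i' using Fin.cases with
      | zero =>
        have h01 : ((0 : Fin (m + 1)).succ : Fin (m + 2)) = 1 := rfl
        simp only [Function.comp_apply, h01, Equiv.swap_apply_right, Fin.cons_zero]
        rw [← h01, Fin.cons_succ, Fin.cons_zero]
      | succ i'' =>
        have hne1 : (i''.succ.succ : Fin (m + 2)) ≠ 1 := by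
          rw [Fin.ne_iff_vne]
          simp [Fin.val_succ]
        have hsw : Equiv.swap (0 : Fin (m + 2)) 1 i''.succ.succ = i''.succ.succ :=
          Equiv.swap_apply_of_ne_of_ne (Fin.succ_ne_zero _) hne1
        simp only [Function.comp_apply, hsw, Fin.cons_succ]
  have h4 := hφ.2.2.1
    (Fin.cons b (Fin.cons a (fun i => μ (j.succAbove i)) : Fin (m + 1) → E)) (Equiv.swap 0 1)
  rw [h3] at h4
  rw [h4, Equiv.Perm.sign_swap (by norm_num : (0 : Fin (m + 2)) ≠ 1), h2,
    Fin.sign_cycleRange]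
  have hv : ((j.succ : Fin (m + 2)) : ℕ) = (j : ℕ) + 1 := Fin.val_succ j
  rw [hv]
  push_cast
  rw [Dfun, ← hx']
  ring

lemma Dfun_gp3 {φ : (Fin (m + 2) → E) → ℝ} (hφ : IsChirotope φ) (μ : Fin (m + 1) → E)
    (j : Fin (m + 1)) (a b c d : E) :
    (Dfun φ μ j b c * Dfun φ μ j a d = 0 ∧ Dfun φ μ j a c * Dfun φ μ j b d = 0 ∧
      Dfun φ μ j a b * Dfun φ μ j c d = 0) ∨
    ((0 < Dfun φ μ j b c * Dfun φ μ j a d ∨ 0 < -(Dfun φ μ j a c * Dfun φ μ j b d) ∨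
        0 < Dfun φ μ j a b * Dfun φ μ j c d) ∧
     (Dfun φ μ j b c * Dfun φ μ j a d < 0 ∨ -(Dfun φ μ j a c * Dfun φ μ j b d) < 0 ∨
        Dfun φ μ j a b * Dfun φ μ j c d < 0)) := by
  set x : Fin (m + 3) → E := Fin.cons a (Fin.cons b (Function.update μ j c)) with hx
  set y : Fin (m + 1) → E := Function.update μ j d with hy
  set T : Fin (m + 3) → ℝ :=
    fun k => ((-1 : ℝ) ^ (k : ℕ)) * φ (x ∘ k.succAbove) * φ (Fin.cons (x k) y) with hT
  -- term 0
  have hc0 : x ∘ (0 : Fin (m + 3)).succAbove = Fin.cons b (Function.update μ j c) := by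
    funext i
    induction i using Fin.cases with
    | zero => simp [hx, -Fin.cons_update]
    | succ i' => simp [hx, -Fin.cons_update]
  have h0 : T 0 = Dfun φ μ j b c * Dfun φ μ j a d := by
    rw [hT]
    simp only [hc0, Fin.val_zero, pow_zero, one_mul]
    rw [show x 0 = a by simp [hx, -Fin.cons_update]]
    rfl
  -- term 1
  have hc1 : x ∘ (1 : Fin (m + 3)).succAbove = Fin.cons a (Function.update μ j c) := by
    funext i
    induction i using Fin.cases with
    | zero =>
      have hz : (1 : Fin (m + 3)).succAbove 0 = 0 := by
        rw [Fin.succAbove_of_castSucc_lt _ _ (by simp)]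
        rfl
      simp [hz, hx, -Fin.cons_update]
    | succ i' =>
      have hs : (1 : Fin (m + 3)).succAbove i'.succ = i'.succ.succ := by
        rw [show (1 : Fin (m + 3)) = (0 : Fin (m + 2)).succ from rfl,
          Fin.succ_succAbove_succ, Fin.succAbove_zero]
      simp [hs, hx, -Fin.cons_update]
  have h1 : T 1 = -(Dfun φ μ j a c * Dfun φ μ j b d) := by
    rw [hT]
    simp only [hc1, Fin.val_one, pow_one]
    rw [show x 1 = b by rw [show (1 : Fin (m + 3)) = (0 : Fin (m + 2)).succ from rfl]; simp [hx, -Fin.cons_update]]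
    show -1 * Dfun φ μ j a c * Dfun φ μ j b d = _
    ring
  -- term j+2
  have hcj : x ∘ (j.succ.succ : Fin (m + 3)).succAbove
      = Fin.cons a (Fin.cons b (fun i => μ (j.succAbove i)) : Fin (m + 1) → E) := by
    funext i
    induction i using Fin.cases with
    | zero =>
      have hz : (j.succ.succ : Fin (m + 3)).succAbove 0 = 0 := by
        rw [Fin.succAbove_of_castSucc_lt _ _ (by simpa using Fin.succ_pos j.succ)]
        rfl
      simp [hz, hx, -Fin.cons_update]
    | succ i' =>
      induction i' using Fin.cases with
      | zero =>
        have hz : (j.succ.succ : Fin (m + 3)).succAbove (0 : Fin (m + 1)).succ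
            = (0 : Fin (m + 2)).succ := by
          rw [Fin.succ_succAbove_succ]
          congr 1
        simp [hz, hx, -Fin.cons_update]
      | succ i'' =>
        have hs : (j.succ.succ : Fin (m + 3)).succAbove i''.succ.succ
            = (j.succAbove i'').succ.succ := by
          rw [Fin.succ_succAbove_succ, Fin.succ_succAbove_succ]
        simp [hs, hx, Function.update_of_ne (Fin.succAbove_ne j i''), -Fin.cons_update]
  have hxj : x j.succ.succ = c := by
    simp [hx, -Fin.cons_update]
  have hj2 : T j.succ.succ = Dfun φ μ j a b * Dfun φ μ j c d := by
    have hsq : ((-1 : ℝ) ^ (j : ℕ)) * ((-1 : ℝ) ^ (j : ℕ)) = 1 := by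
      rw [← pow_add]
      exact Even.neg_one_pow ⟨(j : ℕ), rfl⟩
    rw [hT]
    simp only [hcj, hxj]
    rw [Dfun_consP hφ]
    rw [show ((j.succ.succ : Fin (m + 3)) : ℕ) = (j : ℕ) + 1 + 1 by simp [Fin.val_succ]]
    show ((-1 : ℝ) ^ ((j : ℕ) + 1 + 1)) * ((-1 : ℝ) ^ (j : ℕ) * Dfun φ μ j a b)
        * Dfun φ μ j c d = _
    rw [pow_succ, pow_succ]
    linear_combination (Dfun φ μ j a b * Dfun φ μ j c d) * hsq
  -- other terms vanish
  have hother : ∀ k : Fin (m + 3), k ≠ 0 → k ≠ 1 → k ≠ j.succ.succ → T k = 0 := by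
    intro k hk0 hk1 hkj
    obtain ⟨k1, rfl⟩ : ∃ k1 : Fin (m + 2), k = k1.succ := ⟨k.pred hk0, by simp⟩
    have hk10 : k1 ≠ 0 := by
      intro h; apply hk1; rw [h]; rfl
    obtain ⟨i, rfl⟩ : ∃ i : Fin (m + 1), k1 = i.succ := ⟨k1.pred hk10, by simp⟩
    have hij : i ≠ j := fun h => hkj (by rw [h])
    have hxk : x i.succ.succ = μ i := by
      simp [hx, Function.update_of_ne hij, -Fin.cons_update]
    have hzero : φ (Fin.cons (x i.succ.succ) y) = 0 := by
      apply hφ.2.2.2.1 _ 0 i.succ (Ne.symm (Fin.succ_ne_zero i))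
      rw [hxk]
      simp [hy, Function.update_of_ne hij, -Fin.cons_update]
    rw [hT]
    simp only [hzero, mul_zero]
  rcases hφ.2.2.2.2 x y with hall | ⟨k, l, hk, hl⟩
  · refine Or.inl ⟨?_, ?_, ?_⟩
    · have h : T 0 = 0 := hall 0
      rw [h0] at h; exact h
    · have h : T 1 = 0 := hall 1
      rw [h1] at h; linarith
    · have h : T j.succ.succ = 0 := hall j.succ.succ
      rw [hj2] at h; exact h
  · replace hk : 0 < T k := hk
    replace hl : T l < 0 := hl
    have hktri : k = 0 ∨ k = 1 ∨ k = j.succ.succ := by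
      by_contra h
      push_neg at h
      rw [hother k h.1 h.2.1 h.2.2] at hk
      exact lt_irrefl 0 hk
    have hltri : l = 0 ∨ l = 1 ∨ l = j.succ.succ := by
      by_contra h
      push_neg at h
      rw [hother l h.1 h.2.1 h.2.2] at hl
      exact lt_irrefl 0 hl
    refine Or.inr ⟨?_, ?_⟩
    · rcases hktri with rfl | rfl | rfl
      · left; rw [← h0]; exact hk
      · right; left; rw [← h1]; exact hk
      · right; right; rw [← hj2]; exact hk
    · rcases hltri with rfl | rfl | rfl
      · left; rw [← h0]; exact hl
      · right; left; rw [← h1]; exact hl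
      · right; right; rw [← hj2]; exact hl


lemma step_lemma {E : Type*} [DecidableEq E] {m : ℕ} {φ : (Fin (m + 2) → E) → ℝ}
    (hφ : IsChirotope φ) (E' : Set E) (hfin : E'.Finite)
    (hspan : ∃ b : Fin (m + 2) → E', restrictChi φ E' b ≠ 0)
    (μ : Fin (m + 1) → E) (j : Fin (m + 1))
    (h0 : (fun e : E' => φ (Fin.cons (e : E) μ)) ≠ 0)
    (IH : ∀ f ∈ E', IsCovector (restrictChi φ E')
        (fun e : E' => φ (Fin.cons (e : E) (Function.update μ j f)))) :
    IsCovector (restrictChi φ E') (fun e : E' => φ (Fin.cons (e : E) μ)) := by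
  classical
  set D := Dfun φ μ j with hD
  set p := μ j with hp
  have hDp : ∀ e : E, φ (Fin.cons e μ) = D e p := by
    intro e; rw [hD, Dfun, hp, Function.update_eq_self]
  have tri : ∀ u v, D u v = 0 ∨ D u v = 1 ∨ D u v = -1 := fun u v => Dfun_tri hφ μ j u v
  have skew : ∀ u v, D v u = -D u v := fun u v => Dfun_skew hφ μ j u v
  have diag : ∀ u, D u u = 0 := fun u => Dfun_diag hφ μ j u
  have gp3 : ∀ a b c d : E,
      (D b c * D a d = 0 ∧ D a c * D b d = 0 ∧ D a b * D c d = 0) ∨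
      ((0 < D b c * D a d ∨ 0 < -(D a c * D b d) ∨ 0 < D a b * D c d) ∧
       (D b c * D a d < 0 ∨ -(D a c * D b d) < 0 ∨ D a b * D c d < 0)) :=
    fun a b c d => Dfun_gp3 hφ μ j a b c d
  -- a nonvanishing element e0
  obtain ⟨e0, he0⟩ : ∃ e0 : E', D (e0 : E) p ≠ 0 := by
    obtain ⟨e, he⟩ := Function.ne_iff.mp h0
    refine ⟨e, ?_⟩
    have he' : φ (Fin.cons ((e : E)) μ) ≠ 0 := he
    rwa [hDp] at he'
  -- an element g0 of E' completing e0 to a pencil-spanning pair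
  obtain ⟨bb, hbb⟩ := hspan
  have hbb' : φ (fun i => ((bb i : E))) ≠ 0 := hbb
  have hx : φ (Fin.cons ((e0 : E)) μ) ≠ 0 := by rw [hDp]; exact he0
  obtain ⟨i0, hi0⟩ := chirotope_exchange hφ hx hbb' j.succ
  rw [← Fin.cons_update] at hi0
  have hg0mem : ((bb i0 : E)) ∈ E' := (bb i0).2
  have he0g0 : D (e0 : E) ((bb i0 : E)) ≠ 0 := hi0
  by_cases hA : ∃ e1, e1 ∈ E' ∧ D e1 p = 0 ∧ ∃ w : E, D e1 w ≠ 0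
  · -- Case A : p is parallel to some nonloop element e1 of E'
    obtain ⟨e1, he1mem, he1p, w, he1w⟩ := hA
    have h10 : D e1 (e0 : E) ≠ 0 := by
      intro hcon
      have hPe : D p e1 = 0 := by rw [skew e1 p, he1p, neg_zero]
      have hQe : D (e0 : E) e1 = 0 := by rw [skew e1 (e0 : E), hcon, neg_zero]
      rcases gp3 (e0 : E) p e1 w with ⟨h1, h2, h3⟩ | ⟨hpos, hneg⟩
      · exact (mul_ne_zero he0 he1w) h3
      · rw [hPe, hQe] at hpos hneg
        simp only [zero_mul, neg_zero] at hpos hneg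
        rcases hpos with h | h | h <;> rcases hneg with h' | h' | h' <;> linarith
    have key : ∀ e : E, D e p = (-(D e1 (e0 : E) * D (e0 : E) p)) * D e e1 := by
      intro e
      rcases gp3 e e1 (e0 : E) p with ⟨h1, h2, h3⟩ | ⟨hpos, hneg⟩
      · have hDep : D e p = 0 := by
          rcases mul_eq_zero.mp h1 with h | h
          · exact absurd h h10
          · exact h
        have hDee1 : D e e1 = 0 := by
          rcases mul_eq_zero.mp h3 with h | h
          · exact h
          · exact absurd h he0
        rw [hDep, hDee1]; ring
      · have hQ : D e (e0 : E) * D e1 p = 0 := by rw [he1p]; ring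
        rw [hQ] at hpos hneg
        simp only [neg_zero] at hpos hneg
        have hPtri := tri_mul (tri e1 (e0 : E)) (tri e p)
        have hRtri := tri_mul (tri e e1) (tri (e0 : E) p)
        have hPR : D e1 (e0 : E) * D e p = -(D e e1 * D (e0 : E) p) := by
          rcases hpos with h | h | h <;> rcases hneg with h' | h' | h' <;>
            first
              | linarith
              | (rcases hPtri with a1 | a1 | a1 <;> rcases hRtri with a2 | a2 | a2 <;> linarith)
        have hsq : D e1 (e0 : E) * D e1 (e0 : E) = 1 := tri_sq (tri e1 (e0 : E)) h10
        linear_combination (D e1 (e0 : E)) * hPR - (D e p) * hsq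
    have hcpm : (-(D e1 (e0 : E) * D (e0 : E) p)) = 1 ∨ (-(D e1 (e0 : E) * D (e0 : E) p)) = -1 := by
      rcases tri_pm (tri e1 (e0 : E)) h10 with h | h <;>
        rcases tri_pm (tri (e0 : E) p) he0 with h' | h' <;> rw [h, h'] <;> norm_num
    have hfun : (fun e : E' => φ (Fin.cons ((e : E)) μ))
        = fun e : E' => (-(D e1 (e0 : E) * D (e0 : E) p)) * D ((e : E)) e1 := by
      funext e; rw [hDp, key]
    rw [hfun]
    exact IsCovector.smul hcpm (IH e1 he1mem)
  · -- Case B : every element of E' parallel to p is a loop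
    push_neg at hA
    set s : Finset E := hfin.toFinset.filter (fun e => D e p ≠ 0) with hs
    have hmem_s : ∀ e, e ∈ s ↔ e ∈ E' ∧ D e p ≠ 0 := by
      intro e; simp [hs, Set.Finite.mem_toFinset]
    have hr_eq : ∀ u v : E, D u p ≠ 0 → D v p ≠ 0 →
        0 < D u p * D v p * D u v → D u v = D u p * D v p := by
      intro u v hu hv h
      rcases tri_pm (tri u p) hu with h1 | h1 <;> rcases tri_pm (tri v p) hv with h2 | h2 <;>
        rcases tri u v with h3 | h3 | h3 <;> rw [h1, h2, h3] at h ⊢ <;> revert h <;> norm_num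
    obtain ⟨f, hfs, hfmax⟩ := finset_exists_rel_maximal
        (fun u v => 0 < D u p * D v p * D u v) s
      (by
        intro aa _ h
        rw [diag aa, mul_zero] at h
        exact lt_irrefl 0 h)
      (by
        intro a ha b hb c hc hab hbc
        have hap := ((hmem_s a).mp ha).2
        have hbp := ((hmem_s b).mp hb).2
        have hcp := ((hmem_s c).mp hc).2
        have e1 : D a b = D a p * D b p := hr_eq a b hap hbp hab
        have e2 : D b c = D b p * D c p := hr_eq b c hbp hcp hbc
        have hPR : D b c * D a p = D a b * D c p := by rw [e1, e2]; ring
        rcases gp3 a b c p with ⟨h1, h2, h3⟩ | ⟨hpos, hneg⟩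
        · rw [e2] at h1
          exact absurd h1 (mul_ne_zero (mul_ne_zero hbp hcp) hap)
        · have hpos' : 0 < D b c * D a p ∨ 0 < -(D a c * D b p) := by
            rcases hpos with h | h | h
            · exact Or.inl h
            · exact Or.inr h
            · exact Or.inl (by rwa [← hPR] at h)
          have hneg' : D b c * D a p < 0 ∨ -(D a c * D b p) < 0 := by
            rcases hneg with h | h | h
            · exact Or.inl h
            · exact Or.inr h
            · exact Or.inl (by rwa [← hPR] at h)
          have hPtri := tri_mul (tri b c) (tri a p)
          have hQtri := tri_mul (tri a c) (tri b p)
          have hQP : D a c * D b p = D b c * D a p := by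
            rcases hpos' with h | h <;> rcases hneg' with h' | h' <;>
              first
                | linarith
                | (rcases hPtri with a1 | a1 | a1 <;> rcases hQtri with a2 | a2 | a2 <;> linarith)
          rw [e2] at hQP
          have hsq : D b p * D b p = 1 := tri_sq (tri b p) hbp
          have hac : D a c = D a p * D c p := by
            linear_combination (D b p) * hQP - (D a c - D a p * D c p) * hsq
          rw [hac]
          rcases tri_pm (tri a p) hap with h1 | h1 <;> rcases tri_pm (tri c p) hcp with h2 | h2 <;>
            rw [h1, h2] <;> norm_num)
      ⟨(e0 : E), (hmem_s _).mpr ⟨e0.2, he0⟩⟩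
    have hfmem : f ∈ E' := ((hmem_s f).mp hfs).1
    have hfp : D f p ≠ 0 := ((hmem_s f).mp hfs).2
    -- an element h' of E' not parallel to f
    obtain ⟨h', hh'mem, hfh⟩ : ∃ h', h' ∈ E' ∧ D f h' ≠ 0 := by
      by_contra hcon
      push_neg at hcon
      have h1 : D ((bb i0 : E)) f = 0 := by
        rw [skew f ((bb i0 : E)), hcon _ hg0mem, neg_zero]
      have h2 : D (e0 : E) f = 0 := by
        rw [skew f (e0 : E), hcon _ e0.2, neg_zero]
      rcases gp3 (e0 : E) ((bb i0 : E)) f p with ⟨ha1, ha2, ha3⟩ | ⟨hpos, hneg⟩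
      · exact (mul_ne_zero he0g0 hfp) ha3
      · rw [h1, h2] at hpos hneg
        simp only [zero_mul, neg_zero] at hpos hneg
        rcases hpos with h | h | h <;> rcases hneg with h' | h' | h' <;> linarith
    -- the two key sign identities
    have claim1 : ∀ e : E, e ∈ E' → D e f ≠ 0 → D e p = D f p * D e f := by
      intro e hemem hef
      have hep : D e p ≠ 0 := fun h => hef (hA e hemem h f)
      have hes : e ∈ s := (hmem_s e).mpr ⟨hemem, hep⟩
      have hnot : ¬ (0 < D f p * D e p * D f e) := hfmax e hes
      rw [skew e f] at hnot
      rcases tri_pm (tri e p) hep with h1 | h1 <;> rcases tri_pm (tri f p) hfp with h2 | h2 <;>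
        rcases tri_pm (tri e f) hef with h3 | h3 <;> rw [h1, h2, h3] at hnot ⊢ <;>
        revert hnot <;> norm_num
    have claim2 : ∀ e : E, e ∈ E' → D e f = 0 → D e p = (D f h' * D f p) * D e h' := by
      intro e hemem hef
      by_cases hep : D e p = 0
      · have hh : D e h' = 0 := hA e hemem hep h'
        rw [hep, hh]; ring
      · rcases gp3 e f h' p with ⟨h1, h2, h3⟩ | ⟨hpos, hneg⟩
        · exact absurd h1 (mul_ne_zero hfh hep)
        · have hR : D e f * D h' p = 0 := by rw [hef]; ring
          rw [hR] at hpos hneg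
          have hPtri := tri_mul (tri f h') (tri e p)
          have hQtri := tri_mul (tri e h') (tri f p)
          have hPQ : D e h' * D f p = D f h' * D e p := by
            rcases hpos with h | h | h <;> rcases hneg with h' | h' | h' <;>
              first
                | linarith
                | (rcases hPtri with a1 | a1 | a1 <;> rcases hQtri with a2 | a2 | a2 <;> linarith)
          have hsq1 : D f p * D f p = 1 := tri_sq (tri f p) hfp
          have hsq2 : D f h' * D f h' = 1 := tri_sq (tri f h') hfh
          have step1 : D e h' = D f h' * D f p * D e p := by
            linear_combination (D f p) * hPQ - (D e h') * hsq1
          rw [step1]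
          linear_combination (-(D e p * D f p * D f p)) * hsq2 - (D e p) * hsq1
    -- assemble the composition
    have hδpm : D f p = 1 ∨ D f p = -1 := tri_pm (tri f p) hfp
    have hδ2pm : D f h' * D f p = 1 ∨ D f h' * D f p = -1 :=
      tri_pm (tri_mul (tri f h') (tri f p)) (mul_ne_zero hfh hfp)
    have covf : IsCovector (restrictChi φ E') (fun e : E' => D f p * D ((e : E)) f) :=
      IsCovector.smul hδpm (IH f hfmem)
    have covh : IsCovector (restrictChi φ E')
        (fun e : E' => (D f h' * D f p) * D ((e : E)) h') :=
      IsCovector.smul hδ2pm (IH h' hh'mem)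
    have hδ0 : D f p ≠ 0 := hfp
    have hfun : (fun e : E' => φ (Fin.cons ((e : E)) μ))
        = scomp (fun e : E' => D f p * D ((e : E)) f)
            (fun e : E' => (D f h' * D f p) * D ((e : E)) h') := by
      funext e
      rw [hDp]
      show D ((e : E)) p = if (D f p * D ((e : E)) f ≠ 0) then D f p * D ((e : E)) f
        else (D f h' * D f p) * D ((e : E)) h'
      by_cases hef : D ((e : E)) f = 0
      · rw [if_neg (by rw [hef]; simp)]
        exact claim2 (e : E) e.2 hef
      · rw [if_pos (mul_ne_zero hδ0 hef)]
        exact claim1 (e : E) e.2 hef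
    rw [hfun]
    exact IsCovector.scompCov covf covh

lemma cocirc_case {E : Type*} [DecidableEq E] {n : ℕ} (φ : (Fin (n + 1) → E) → ℝ)
    (E' : Set E) (μ : Fin n → E) (hall : ∀ i, μ i ∈ E') :
    IsCovector (restrictChi φ E') (fun e : E' => φ (Fin.cons (e : E) μ)) := by
  by_cases h0 : (fun e : E' => φ (Fin.cons (e : E) μ)) = 0
  · rw [h0]; exact IsCovector.zero
  · set μ' : Fin n → E' := fun i => ⟨μ i, hall i⟩ with hμ'
    have hcons : ∀ e : E', (fun i => (((Fin.cons e μ' : Fin (n+1) → E') i) : E)) = Fin.cons ((e : E)) μ := by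
      intro e
      funext i
      induction i using Fin.cases with
      | zero => simp
      | succ i' => simp [hμ']
    refine IsCovector.cocirc _ ⟨h0, 1, μ', Or.inl rfl, fun e => ?_⟩
    show φ (Fin.cons ((e : E)) μ) = 1 * φ (fun i => (((Fin.cons e μ' : Fin (n+1) → E') i) : E))
    rw [one_mul, hcons e]

lemma main_key {E : Type*} [DecidableEq E] {n : ℕ} {φ : (Fin (n + 1) → E) → ℝ}
    (hφ : IsChirotope φ) (E' : Set E) (hfin : E'.Finite)
    (hspan : ∃ b : Fin (n + 1) → E', restrictChi φ E' b ≠ 0) :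
    ∀ (k : ℕ) (μ : Fin n → E), Set.ncard {i : Fin n | μ i ∉ E'} ≤ k →
      IsCovector (restrictChi φ E') (fun e : E' => φ (Fin.cons (e : E) μ)) := by
  intro k
  induction k with
  | zero =>
    intro μ hbad
    have hall : ∀ i, μ i ∈ E' := by
      by_contra h
      push_neg at h
      obtain ⟨i, hi⟩ := h
      have hpos : 0 < Set.ncard {i : Fin n | μ i ∉ E'} :=
        (Set.ncard_pos (Set.toFinite _)).mpr ⟨i, hi⟩
      omega
    exact cocirc_case φ E' μ hall
  | succ k ih =>
    intro μ hbad
    by_cases hall : ∀ i, μ i ∈ E'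
    · exact cocirc_case φ E' μ hall
    push_neg at hall
    obtain ⟨j, hj⟩ := hall
    by_cases h0 : (fun e : E' => φ (Fin.cons (e : E) μ)) = 0
    · rw [h0]; exact IsCovector.zero
    have hn : n ≠ 0 := by rintro rfl; exact j.elim0
    obtain ⟨m, rfl⟩ : ∃ m, n = m + 1 := ⟨n - 1, by omega⟩
    refine step_lemma hφ E' hfin hspan μ j h0 ?_
    intro f hf
    apply ih
    have hsub : {i : Fin (m + 1) | Function.update μ j f i ∉ E'} ⊆ {i | μ i ∉ E'} \ {j} := by
      intro i hi
      simp only [Set.mem_setOf_eq] at hi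
      rcases eq_or_ne i j with rfl | hne
      · rw [Function.update_self] at hi; exact absurd hf hi
      · rw [Function.update_of_ne hne] at hi
        exact ⟨hi, hne⟩
    have h1 : Set.ncard {i : Fin (m + 1) | Function.update μ j f i ∉ E'}
        ≤ Set.ncard ({i : Fin (m + 1) | μ i ∉ E'} \ {j}) :=
      Set.ncard_le_ncard hsub (Set.toFinite _)
    have h2 : Set.ncard ({i : Fin (m + 1) | μ i ∉ E'} \ {j})
        < Set.ncard {i : Fin (m + 1) | μ i ∉ E'} :=
      Set.ncard_diff_singleton_lt_of_mem hj (Set.toFinite _)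
    omega

lemma restr_cocircuit {E : Type*} [DecidableEq E] {n : ℕ} {φ : (Fin (n + 1) → E) → ℝ}
    (hφ : IsChirotope φ) (E' : Set E) (hfin : E'.Finite)
    (hspan : ∃ b : Fin (n + 1) → E', restrictChi φ E' b ≠ 0)
    {X : E → ℝ} (hX : IsCocircuit φ X) :
    IsCovector (restrictChi φ E') (fun e : E' => X (e : E)) := by
  obtain ⟨hne, ε, μ, hε, hval⟩ := hX
  have h1 : (fun e : E' => X (e : E)) = fun e : E' => ε * φ (Fin.cons ((e : E)) μ) := by
    funext e; rw [hval]
  rw [h1]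
  refine IsCovector.smul hε (main_key hφ E' hfin hspan n μ ?_)
  refine le_trans (Set.ncard_le_ncard (Set.subset_univ _) (Set.toFinite _)) ?_
  simp [Set.ncard_univ]

lemma restr_covector {E : Type*} [DecidableEq E] {n : ℕ} {φ : (Fin (n + 1) → E) → ℝ}
    (hφ : IsChirotope φ) (E' : Set E) (hfin : E'.Finite)
    (hspan : ∃ b : Fin (n + 1) → E', restrictChi φ E' b ≠ 0)
    {X : E → ℝ} (hX : IsCovector φ X) :
    IsCovector (restrictChi φ E') (fun e : E' => X (e : E)) := by
  induction hX with
  | zero =>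
    have : (fun e : E' => (0 : E → ℝ) (e : E)) = (0 : E' → ℝ) := rfl
    rw [this]; exact IsCovector.zero
  | cocirc X hX => exact restr_cocircuit hφ E' hfin hspan hX
  | comp X Y hX hY ih =>
    have h1 : (fun e : E' => scomp X Y (e : E))
        = scomp (fun e : E' => X (e : E)) (fun e : E' => Y (e : E)) := rfl
    rw [h1]
    exact IsCovector.scompCov (restr_cocircuit hφ E' hfin hspan hX) ih

lemma cocircuit_lift {E : Type*} [DecidableEq E] {n : ℕ} {φ : (Fin (n + 1) → E) → ℝ}
    (E' : Set E) {X' : E' → ℝ} (hX' : IsCocircuit (restrictChi φ E') X') :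
    ∃ X : E → ℝ, IsCocircuit φ X ∧ ∀ e : E', X' e = X (e : E) := by
  obtain ⟨hne, ε, μ', hε, hval⟩ := hX'
  refine ⟨fun e => ε * φ (Fin.cons e (fun i => ((μ' i : E)))), ⟨?_, ε, _, hε, fun e => rfl⟩, ?_⟩
  · obtain ⟨e, he⟩ := Function.ne_iff.mp hne
    refine Function.ne_iff.mpr ⟨(e : E), ?_⟩
    have hcons : (fun i => (((Fin.cons e μ' : Fin (n+1) → E') i) : E))
        = Fin.cons ((e : E)) (fun i => ((μ' i : E))) := by
      funext i
      induction i using Fin.cases with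
      | zero => simp
      | succ i' => simp
    have h2 : X' e = ε * φ (Fin.cons ((e : E)) (fun i => ((μ' i : E)))) := by
      rw [hval e]
      show ε * φ (fun i => (((Fin.cons e μ' : Fin (n+1) → E') i) : E)) = _
      rw [hcons]
    simpa [← h2] using he
  · intro e
    rw [hval e]
    show ε * φ (fun i => (((Fin.cons e μ' : Fin (n+1) → E') i) : E)) = _
    congr 1
    apply congrArg
    funext i
    induction i using Fin.cases with
    | zero => simp
    | succ i' => simp

theorem covectors_of_restriction' {E : Type*} [DecidableEq E] {n : ℕ}
    (φ : (Fin (n + 1) → E) → ℝ) (hφ : IsChirotope φ)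
    (E' : Set E) (hfin : E'.Finite)
    (hspan : ∃ b : Fin (n + 1) → E', restrictChi φ E' b ≠ 0) :
    ({X' : E' → ℝ | IsCovector (restrictChi φ E') X'} =
      {X' : E' → ℝ | ∃ X : E → ℝ, IsCovector φ X ∧ ∀ e : E', X' e = X e}) ∧
    (∀ X Y : E → ℝ, IsCovector φ X → IsCovector φ Y →
      (∀ e, X e ≠ 0 → Y e = X e) →
      (∀ e : E', X (e : E) ≠ 0 → Y (e : E) = X (e : E))) := by
  constructor
  · ext X'
    simp only [Set.mem_setOf_eq]
    constructor
    · intro h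
      induction h with
      | zero => exact ⟨0, IsCovector.zero, fun e => rfl⟩
      | cocirc X hX =>
        obtain ⟨Y, hY, hagree⟩ := cocircuit_lift E' hX
        exact ⟨Y, IsCovector.cocirc _ hY, hagree⟩
      | comp X Y hX hY ih =>
        obtain ⟨Z, hZ, hZagree⟩ := cocircuit_lift E' hX
        obtain ⟨W, hW, hWagree⟩ := ih
        refine ⟨scomp Z W, IsCovector.comp _ _ hZ hW, fun e => ?_⟩
        show (if X e ≠ 0 then X e else Y e) = (if Z ((e : E)) ≠ 0 then Z ((e : E)) else W ((e : E)))
        rw [← hZagree e, ← hWagree e]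
    · rintro ⟨X, hX, hagree⟩
      have h1 : X' = fun e : E' => X (e : E) := funext hagree
      rw [h1]
      exact restr_covector hφ E' hfin hspan hX
  · intro X Y _ _ h e he
    exact h (e : E) he

/-- The covectors of the restriction of an oriented matroid to a finite subset
`E'` of the ground set are exactly the restrictions of covectors; restriction is
order preserving. -/
theorem covectors_of_restriction (φ : (Fin (n + 1) → E) → ℝ) (hφ : IsChirotope φ)
    (E' : Set E) (hfin : E'.Finite)
    (hspan : ∃ b : Fin (n + 1) → E', restrictChi φ E' b ≠ 0) :
    ({X' : E' → ℝ | IsCovector (restrictChi φ E') X'} =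
      {X' : E' → ℝ | ∃ X : E → ℝ, IsCovector φ X ∧ ∀ e : E', X' e = X e}) ∧
    (∀ X Y : E → ℝ, IsCovector φ X → IsCovector φ Y → sle X Y →
      sle (fun e : E' => X e) (fun e : E' => Y e)) := by
  refine ⟨(covectors_of_restriction' φ hφ E' hfin hspan).1, ?_⟩
  intro X Y _ _ h e he
  exact h (e : E) he
end
end

section
/- Every diagonalizable (ordinary) seminorm on K^{n+1} over a non-Archimedean field lies in the tropical convex hull of the valuated cocircuits: if ||·||_{B,c} is diagonalizable with ordered basis B = (b_0,…,b_n) and weights c_0 ≥ … ≥ c_n ≥ 0, then for every f, ||f||_{B,c} = max_i ( c_i · |det(B)|^{-1} · ||f||_{μ_i} ), where μ_i = B \ {b_i} and ||f||_{μ_i} = |det(μ_i ∪ {f})|_K. -/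
noncomputable section

variable {K : Type*} [Field K] [LinearOrder K] [IsStrictOrderedRing K] {V : Type*} [AddCommGroup V] [Module K V]

/-- The sign of an element of a linear ordered field, as a real number. -/
def sgn (x : K) : ℝ := if 0 < x then 1 else if x < 0 then -1 else 0

/-- `av` is a non-Archimedean absolute value. -/
def IsNonarch (av : AbsoluteValue K ℝ) : Prop := ∀ x y : K, av (x + y) ≤ max (av x) (av y)

/-- `av` is compatible with the order on `K`: `0 ≤ a ≤ b` implies `av a ≤ av b`. -/
def Compat (av : AbsoluteValue K ℝ) : Prop := ∀ x y : K, 0 ≤ x → x ≤ y → av x ≤ av y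

/-- `K` is real closed. -/
def IsRealClosed' (K : Type*) [Field K] [LinearOrder K] [IsStrictOrderedRing K] : Prop :=
  (∀ x : K, 0 ≤ x → ∃ y, y * y = x) ∧
  ∀ p : Polynomial K, Odd p.natDegree → ∃ x, p.eval x = 0

/-- A signed seminorm on `V` with respect to the absolute value `av` on `K`. -/
def IsSignedSeminorm (av : AbsoluteValue K ℝ) (N : V → ℝ) : Prop :=
  (∀ (c : K) (v : V), N (c • v) = sgn c * av c * N v) ∧
  (∀ v w : V, min (N v) (N w) ≤ N (v + w) ∧ N (v + w) ≤ max (N v) (N w))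

/-- A diagonalizable seminorm `‖·‖_{B,c}` equals the tropical combination
`max_i c_i |det B|⁻¹ ‖·‖_{μ_i}` of the valuated cocircuits `‖f‖_{μ_i} =
|det(μ_i ∪ f)|`, where `μ_i = B \ {b_i}`. -/
theorem diagonalizable_seminorm_tropical_combination {n : ℕ}
    (av : AbsoluteValue K ℝ) (hna : IsNonarch av)
    (b : Fin (n + 1) → Fin (n + 1) → K) (hb : (Matrix.of b).det ≠ 0)
    (c : Fin (n + 1) → ℝ) (hmono : Antitone c) (hpos : ∀ i, 0 ≤ c i)
    (v : Fin (n + 1) → K) (lam : Fin (n + 1) → K) (hv : v = ∑ i, lam i • b i) :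
    (Finset.univ.sup' Finset.univ_nonempty fun i => av (lam i) * c i) =
      Finset.univ.sup' Finset.univ_nonempty fun i =>
        c i * (av ((Matrix.of b).det))⁻¹ * av ((Matrix.of (Function.update b i v)).det) := by
  apply Finset.sup'_congr _ rfl
  intro i _
  have hdet : (Matrix.of (Function.update b i v)).det = lam i * (Matrix.of b).det := by
    have : Matrix.of (Function.update b i v) = (Matrix.of b).updateRow i v := rfl
    rw [this, hv]
    exact Matrix.det_updateRow_sum (Matrix.of b) i lam
  rw [hdet, map_mul]
  have havd : av ((Matrix.of b).det) ≠ 0 := av.ne_zero hb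
  field_simp
end
end
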